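/- Let α ∈ (1,2). Then g_α(x) ~ (α+1)^{1/(α+1)-1} · x^{-1/(α+1)-1} / Γ((α-1)/(α+1)) as x → +∞, i.e. the ratio of g_α(x) to the right-hand side tends to 1 as x → +∞. (This is the first-order asymptotic behaviour at infinity of the density of 𝒜_α.) -/

import Mathlib

open Filter

/-- The series representation `g_α` of the density of `𝒜_α`
(with `1/Γ` the reciprocal Gamma function, equal to `0` at poles of `Γ`). -/
noncomputable def seriesDensity (α x : ℝ) : ℝ :=
  Real.Gamma (α/(α+1)) * ∑' n : ℕ,
    (-1:ℝ)^n * (α+1) ^ (((n:ℝ)+1)/(α+1) - 1) * x ^ (-(((n:ℝ)+1)/(α+1)) - 1) /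
      ((n.factorial : ℝ) * Real.Gamma (1 - ((n:ℝ)+1)/(α+1)) * Real.Gamma (1 - ((n:ℝ)+2)/(α+1)))

/-- Bound on the reciprocal Gamma function via Euler's reflection formula. -/
lemma inv_gamma_abs_le {s : ℝ} (hs : 0 < s) :
    |(Real.Gamma (1 - s))⁻¹| ≤ Real.Gamma s / Real.pi := by
  have hΓs : 0 < Real.Gamma s := Real.Gamma_pos_of_pos hs
  rcases eq_or_ne (Real.Gamma (1 - s)) 0 with h | h
  · rw [h, inv_zero, abs_zero]
    exact div_nonneg hΓs.le Real.pi_pos.le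
  · have hrefl := Real.Gamma_mul_Gamma_one_sub s
    have hsin : Real.sin (Real.pi * s) ≠ 0 := by
      intro h0
      rw [h0, div_zero] at hrefl
      exact (mul_ne_zero hΓs.ne' h) hrefl
    rw [eq_div_iff hsin] at hrefl
    have h1 : Real.Gamma (1 - s) = Real.pi / (Real.sin (Real.pi * s) * Real.Gamma s) := by
      rw [eq_div_iff (mul_ne_zero hsin hΓs.ne')]
      linear_combination hrefl
    rw [h1, inv_div, abs_div, abs_of_pos Real.pi_pos, abs_mul]
    gcongr
    calc |Real.sin (Real.pi * s)| * |Real.Gamma s| ≤ 1 * |Real.Gamma s| := by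
          gcongr
          exact abs_le.2 ⟨Real.neg_one_le_sin _, Real.sin_le_one _⟩
      _ = Real.Gamma s := by rw [one_mul, abs_of_pos hΓs]

/-- Coefficients of the series for `g_α` relative to its leading term. -/
noncomputable def cterm (β : ℝ) (n : ℕ) : ℝ :=
  (-1:ℝ)^n * β ^ ((n:ℝ)/β) * (Real.Gamma (1 - 1/β) * Real.Gamma (1 - 2/β)) /
    ((n.factorial : ℝ) * Real.Gamma (1 - ((n:ℝ)+1)/β) * Real.Gamma (1 - ((n:ℝ)+2)/β))

/-- A positive dominating sequence for `|cterm β n|`. -/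
noncomputable def dterm (β : ℝ) (n : ℕ) : ℝ :=
  β ^ ((n:ℝ)/β) * (Real.Gamma (1 - 1/β) * Real.Gamma (1 - 2/β)) * ((n.factorial : ℝ))⁻¹ *
    (Real.Gamma (((n:ℝ)+1)/β) / Real.pi) * (Real.Gamma (((n:ℝ)+2)/β) / Real.pi)

lemma abs_cterm_le (β : ℝ) (hβ2 : 2 < β) (n : ℕ) : |cterm β n| ≤ dterm β n := by
  have hβ0 : (0:ℝ) < β := by linarith
  have hΓ1 : 0 < Real.Gamma (1 - 1/β) := Real.Gamma_pos_of_pos (by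
    have : 1/β < 1 := by rw [div_lt_one hβ0]; linarith
    linarith)
  have hΓ2 : 0 < Real.Gamma (1 - 2/β) := Real.Gamma_pos_of_pos (by
    have : 2/β < 1 := by rw [div_lt_one hβ0]; linarith
    linarith)
  have hp1 : (0:ℝ) < ((n:ℝ)+1)/β := by positivity
  have hp2 : (0:ℝ) < ((n:ℝ)+2)/β := by positivity
  have heq : |cterm β n| = (β ^ ((n:ℝ)/β) * (Real.Gamma (1 - 1/β) * Real.Gamma (1 - 2/β)) *
      ((n.factorial : ℝ))⁻¹) * |Real.Gamma (1 - ((n:ℝ)+1)/β)|⁻¹ *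
      |Real.Gamma (1 - ((n:ℝ)+2)/β)|⁻¹ := by
    rw [cterm, div_eq_mul_inv, mul_inv, mul_inv]
    simp only [abs_mul, abs_inv, abs_pow, abs_neg, abs_one, one_pow, one_mul, Nat.abs_cast]
    rw [abs_of_pos (Real.rpow_pos_of_pos hβ0 _), abs_of_pos hΓ1, abs_of_pos hΓ2]
    ring
  rw [heq, dterm]
  have hb1 := inv_gamma_abs_le hp1
  have hb2 := inv_gamma_abs_le hp2
  rw [abs_inv] at hb1 hb2
  gcongr

lemma summable_dterm (β : ℝ) (hβ2 : 2 < β) (hβ3 : β < 3) : Summable (dterm β) := by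
  have hβ0 : (0:ℝ) < β := by linarith
  have hr : β ^ (1/β - 1) < 1 :=
    Real.rpow_lt_one_of_one_lt_of_neg (by linarith)
      (by rw [sub_neg]; rw [div_lt_one hβ0]; linarith)
  apply summable_of_ratio_norm_eventually_le hr
  filter_upwards [eventually_ge_atTop 3] with n hn
  have hΓ1 : 0 < Real.Gamma (1 - 1/β) := Real.Gamma_pos_of_pos (by
    have : 1/β < 1 := by rw [div_lt_one hβ0]; linarith
    linarith)
  have hΓ2 : 0 < Real.Gamma (1 - 2/β) := Real.Gamma_pos_of_pos (by
    have : 2/β < 1 := by rw [div_lt_one hβ0]; linarith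
    linarith)
  have hn3 : (3:ℝ) ≤ (n:ℝ) := by exact_mod_cast hn
  have hp1 : (0:ℝ) < ((n:ℝ)+1)/β := by positivity
  have hp2 : (0:ℝ) < ((n:ℝ)+2)/β := by positivity
  have hdpos : ∀ m : ℕ, 0 ≤ dterm β m := by
    intro m
    have := Real.Gamma_pos_of_pos (show (0:ℝ) < ((m:ℝ)+1)/β by positivity)
    have := Real.Gamma_pos_of_pos (show (0:ℝ) < ((m:ℝ)+2)/β by positivity)
    rw [dterm]
    positivity
  rw [Real.norm_eq_abs, Real.norm_eq_abs, abs_of_nonneg (hdpos _), abs_of_nonneg (hdpos _)]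
  have hkey : Real.Gamma (((n:ℝ)+3)/β) ≤ ((n:ℝ)+1)/β * Real.Gamma (((n:ℝ)+1)/β) := by
    have ha : (2:ℝ) ≤ ((n:ℝ)+3)/β := by
      rw [le_div_iff₀ hβ0]; nlinarith
    have hle : ((n:ℝ)+3)/β ≤ ((n:ℝ)+1)/β + 1 := by
      rw [div_add' _ _ _ hβ0.ne', div_le_div_iff₀ hβ0 hβ0]
      nlinarith
    calc Real.Gamma (((n:ℝ)+3)/β)
        ≤ Real.Gamma (((n:ℝ)+1)/β + 1) :=
          Real.Gamma_strictMonoOn_Ici.monotoneOn ha (le_trans ha hle) hle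
      _ = ((n:ℝ)+1)/β * Real.Gamma (((n:ℝ)+1)/β) := Real.Gamma_add_one hp1.ne'
  have e1 : dterm β (n+1) = (β ^ ((n:ℝ)/β) * β ^ (1/β)
      * (Real.Gamma (1 - 1/β) * Real.Gamma (1 - 2/β)) * (((n:ℝ)+1)⁻¹ * ((n.factorial:ℝ))⁻¹)
      * (Real.Gamma (((n:ℝ)+2)/β) / Real.pi) * (1 / Real.pi))
      * Real.Gamma (((n:ℝ)+3)/β) := by
    rw [dterm]
    push_cast
    rw [show ((n:ℝ)+1)/β = (n:ℝ)/β + 1/β by ring, Real.rpow_add hβ0, Nat.factorial_succ]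
    push_cast
    rw [mul_inv, show ((n:ℝ)+1+1) = (n:ℝ)+2 by ring, show ((n:ℝ)+1+2) = (n:ℝ)+3 by ring]
    ring
  have e2 : β ^ (1/β - 1) * dterm β n = (β ^ ((n:ℝ)/β) * β ^ (1/β)
      * (Real.Gamma (1 - 1/β) * Real.Gamma (1 - 2/β)) * (((n:ℝ)+1)⁻¹ * ((n.factorial:ℝ))⁻¹)
      * (Real.Gamma (((n:ℝ)+2)/β) / Real.pi) * (1 / Real.pi))
      * (((n:ℝ)+1)/β * Real.Gamma (((n:ℝ)+1)/β)) := by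
    rw [dterm, Real.rpow_sub hβ0, Real.rpow_one]
    have hn1 : ((n:ℝ)+1) ≠ 0 := by positivity
    field_simp
  rw [e1, e2]
  have hE : 0 ≤ β ^ ((n:ℝ)/β) * β ^ (1/β)
      * (Real.Gamma (1 - 1/β) * Real.Gamma (1 - 2/β)) * (((n:ℝ)+1)⁻¹ * ((n.factorial:ℝ))⁻¹)
      * (Real.Gamma (((n:ℝ)+2)/β) / Real.pi) * (1 / Real.pi) := by
    have := Real.Gamma_pos_of_pos hp2
    positivity
  exact mul_le_mul_of_nonneg_left hkey hE

lemma summable_abs_cterm (β : ℝ) (hβ2 : 2 < β) (hβ3 : β < 3) :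
    Summable fun n => |cterm β n| :=
  Summable.of_nonneg_of_le (fun n => abs_nonneg _) (abs_cterm_le β hβ2)
    (summable_dterm β hβ2 hβ3)

lemma cterm_zero (β : ℝ) (hβ2 : 2 < β) : cterm β 0 = 1 := by
  have hβ0 : (0:ℝ) < β := by linarith
  have hΓ1 : Real.Gamma (1 - 1/β) ≠ 0 := (Real.Gamma_pos_of_pos (by
    have : 1/β < 1 := by rw [div_lt_one hβ0]; linarith
    linarith)).ne'
  have hΓ2 : Real.Gamma (1 - 2/β) ≠ 0 := (Real.Gamma_pos_of_pos (by
    have : 2/β < 1 := by rw [div_lt_one hβ0]; linarith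
    linarith)).ne'
  rw [one_div] at hΓ1
  rw [cterm]
  norm_num
  exact ⟨hΓ1, hΓ2⟩

set_option maxHeartbeats 1000000 in
lemma tsum_cterm_sub_one_bound (β : ℝ) (hβ2 : 2 < β) (hβ3 : β < 3) {y : ℝ}
    (hy0 : 0 ≤ y) (hy1 : y ≤ 1) :
    |(∑' n : ℕ, cterm β n * y^n) - 1| ≤ (∑' n : ℕ, |cterm β (n+1)|) * y := by
  have hc := summable_abs_cterm β hβ2 hβ3
  have hc1 : Summable fun n => |cterm β (n+1)| := (summable_nat_add_iff 1).2 hc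
  have hsy : Summable fun n : ℕ => cterm β n * y^n := by
    apply Summable.of_norm_bounded hc
    intro n
    rw [norm_mul, Real.norm_eq_abs, Real.norm_eq_abs, abs_pow, abs_of_nonneg hy0]
    calc |cterm β n| * y ^ n ≤ |cterm β n| * 1 := by
          gcongr
          exact pow_le_one₀ hy0 hy1
      _ = |cterm β n| := mul_one _
  rw [Summable.tsum_eq_zero_add hsy, cterm_zero β hβ2, pow_zero, mul_one, add_sub_cancel_left]
  have hsy1 : Summable fun n : ℕ => |cterm β (n+1) * y^(n+1)| := by
    apply Summable.of_nonneg_of_le (fun n => abs_nonneg _) ?_ hc1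
    intro n
    rw [abs_mul, abs_pow, abs_of_nonneg hy0]
    calc |cterm β (n+1)| * y ^ (n+1) ≤ |cterm β (n+1)| * 1 := by
          gcongr
          exact pow_le_one₀ hy0 hy1
      _ = |cterm β (n+1)| := mul_one _
  have habs : ∀ g : ℕ → ℝ, (Summable fun n => |g n|) → |∑' n, g n| ≤ ∑' n, |g n| := by
    intro g hg
    simpa [Real.norm_eq_abs] using
      norm_tsum_le_tsum_norm (f := g) (by simpa [Real.norm_eq_abs] using hg)
  calc |∑' n : ℕ, cterm β (n+1) * y^(n+1)|
      ≤ ∑' n : ℕ, |cterm β (n+1) * y^(n+1)| := habs _ hsy1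
    _ ≤ ∑' n : ℕ, |cterm β (n+1)| * y := by
        apply Summable.tsum_le_tsum ?_ hsy1 (hc1.mul_right y)
        intro n
        rw [abs_mul, abs_pow, abs_of_nonneg hy0, pow_succ]
        calc |cterm β (n+1)| * (y ^ n * y) ≤ |cterm β (n+1)| * (1 * y) := by
              gcongr
              exact pow_le_one₀ hy0 hy1
          _ = |cterm β (n+1)| * y := by rw [one_mul]
    _ = (∑' n : ℕ, |cterm β (n+1)|) * y := tsum_mul_right

lemma term_eq (β x : ℝ) (hβ2 : 2 < β) (hx : 0 < x) (n : ℕ) :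
    Real.Gamma (1 - 1/β) * ((-1:ℝ)^n * β ^ (((n:ℝ)+1)/β - 1) * x ^ (-(((n:ℝ)+1)/β) - 1) /
      ((n.factorial : ℝ) * Real.Gamma (1 - ((n:ℝ)+1)/β) * Real.Gamma (1 - ((n:ℝ)+2)/β)))
    = (β ^ (1/β - 1) * x ^ (-(1/β) - 1) / Real.Gamma (1 - 2/β)) *
      (cterm β n * (x ^ (-(1/β)))^n) := by
  have hβ0 : (0:ℝ) < β := by linarith
  have hΓ2 : Real.Gamma (1 - 2/β) ≠ 0 := (Real.Gamma_pos_of_pos (by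
    have : 2/β < 1 := by rw [div_lt_one hβ0]; linarith
    linarith)).ne'
  have h1 : β ^ (((n:ℝ)+1)/β - 1) = β ^ ((n:ℝ)/β) * β ^ (1/β - 1) := by
    rw [← Real.rpow_add hβ0]
    ring_nf
  have h2 : x ^ (-(((n:ℝ)+1)/β) - 1) = (x ^ (-(1/β)))^n * x ^ (-(1/β) - 1) := by
    rw [← Real.rpow_natCast (x ^ (-(1/β))) n, ← Real.rpow_mul hx.le, ← Real.rpow_add hx]
    ring_nf
  rw [cterm, h1, h2]
  linear_combination (- (Real.Gamma (1-1/β) * (-1:ℝ)^n * β ^ ((n:ℝ)/β) * β ^ (1/β-1) *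
      (x ^ (-(1/β)))^n * x ^ (-(1/β)-1)) /
      ((n.factorial:ℝ) * Real.Gamma (1 - ((n:ℝ)+1)/β) * Real.Gamma (1 - ((n:ℝ)+2)/β))) *
      mul_inv_cancel₀ hΓ2

lemma key_eq {α : ℝ} (hα1 : 1 < α) (x : ℝ) (hx : 0 < x) :
    seriesDensity α x = ((α+1) ^ (1/(α+1) - 1) * x ^ (-(1/(α+1)) - 1) /
      Real.Gamma ((α-1)/(α+1))) * ∑' n : ℕ, cterm (α+1) n * (x ^ (-(1/(α+1))))^n := by
  have hβ0 : (0:ℝ) < α + 1 := by linarith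
  have e1 : α/(α+1) = 1 - 1/(α+1) := by field_simp; ring
  have e2 : (α-1)/(α+1) = 1 - 2/(α+1) := by field_simp; ring
  rw [seriesDensity, e1, e2, ← tsum_mul_left, ← tsum_mul_left]
  exact tsum_congr fun n => term_eq (α+1) x (by linarith) hx n

/-- First-order asymptotics at infinity of the density of `𝒜_α`:
`g_α(x) ~ (α+1)^{1/(α+1)-1} x^{-1/(α+1)-1} / Γ((α-1)/(α+1))` as `x → +∞`. -/
theorem density_asymptotics_at_infinity
    {α : ℝ} (hα1 : 1 < α) (hα2 : α < 2) :
    Tendsto (fun x : ℝ => seriesDensity α x /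
        ((α+1) ^ (1/(α+1) - 1) * x ^ (-(1/(α+1)) - 1) / Real.Gamma ((α-1)/(α+1))))
      atTop (nhds 1) := by
  have hβ2 : (2:ℝ) < α + 1 := by linarith
  have hβ3 : α + 1 < 3 := by linarith
  have hβ0 : (0:ℝ) < α + 1 := by linarith
  have hq : (0:ℝ) < 1/(α+1) := by positivity
  set S : ℝ := ∑' n : ℕ, |cterm (α+1) (n+1)| with hS
  have hΓ : 0 < Real.Gamma ((α-1)/(α+1)) :=
    Real.Gamma_pos_of_pos (div_pos (by linarith) hβ0)
  rw [← tendsto_sub_nhds_zero_iff]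
  apply squeeze_zero_norm' (a := fun x : ℝ => S * x ^ (-(1/(α+1))))
  · filter_upwards [eventually_ge_atTop (1:ℝ)] with x hx
    have hx0 : (0:ℝ) < x := by linarith
    have hy0 : (0:ℝ) ≤ x ^ (-(1/(α+1))) := Real.rpow_nonneg hx0.le _
    have hy1 : x ^ (-(1/(α+1))) ≤ 1 :=
      Real.rpow_le_one_of_one_le_of_nonpos hx (by linarith)
    have hK : ((α+1) ^ (1/(α+1) - 1) * x ^ (-(1/(α+1)) - 1) /
        Real.Gamma ((α-1)/(α+1))) ≠ 0 := by
      have h1 : (0:ℝ) < (α+1) ^ (1/(α+1) - 1) := Real.rpow_pos_of_pos hβ0 _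
      have h2 : (0:ℝ) < x ^ (-(1/(α+1)) - 1) := Real.rpow_pos_of_pos hx0 _
      positivity
    rw [Real.norm_eq_abs, key_eq hα1 x hx0, mul_div_cancel_left₀ _ hK]
    exact tsum_cterm_sub_one_bound (α+1) hβ2 hβ3 hy0 hy1
  · have := (tendsto_rpow_neg_atTop hq).const_mul S
    simpa using this
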